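/- arXiv:2004.04319 — 2 statements merged into one kernel-verified Lean document; each statement's English description precedes it below -/
import Mathlib

section
/- Negative semidefiniteness of A^{-1}Δ_h (used for unique solvability of the scheme): Let T denote the linear map on interior grid data (real arrays indexed by i = 1,...,N_x, j = 1,...,N_y) that sends u to Δ_h(ext u), where ext u is the extension of u to ghost cells via the discrete Neumann BC. Let Δt > 0, M > 0, β ≥ 0, α ≥ 0, c = 2/Δt^2 + β/Δt, and A = c·I - (M/2)T^3 - (Mα/2)T. Then A is invertible, and for every interior grid datum b one has (A^{-1}(T b), b)_m ≤ 0. -/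
open Finset

/-- Discrete inner product `(f,g)_m` over interior cells `i = 1,...,Nx`, `j = 1,...,Ny`. -/
noncomputable def innerM (Nx Ny : ℕ) (hx hy : ℝ) (f g : ℕ → ℕ → ℝ) : ℝ :=
  ∑ i ∈ Finset.Icc 1 Nx, ∑ j ∈ Finset.Icc 1 Ny, hx * hy * f i j * g i j

/-- Discrete inner product `(u,v)_x` for x-edge arrays; index `i` stands for `i + 1/2`. -/
noncomputable def innerX (Nx Ny : ℕ) (hx hy : ℝ) (u v : ℕ → ℕ → ℝ) : ℝ :=
  ∑ i ∈ Finset.Icc 1 (Nx - 1), ∑ j ∈ Finset.Icc 1 Ny, hx * hy * u i j * v i j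

/-- Discrete inner product `(u,v)_y` for y-edge arrays; index `j` stands for `j + 1/2`. -/
noncomputable def innerY (Nx Ny : ℕ) (hx hy : ℝ) (u v : ℕ → ℕ → ℝ) : ℝ :=
  ∑ i ∈ Finset.Icc 1 Nx, ∑ j ∈ Finset.Icc 1 (Ny - 1), hx * hy * u i j * v i j

/-- `[d_x g]_{i+1/2, j}`, stored at index `(i, j)`. -/
noncomputable def dX (hx : ℝ) (g : ℕ → ℕ → ℝ) : ℕ → ℕ → ℝ := fun i j => (g (i + 1) j - g i j) / hx

/-- `[d_y g]_{i, j+1/2}`, stored at index `(i, j)`. -/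
noncomputable def dY (hy : ℝ) (g : ℕ → ℕ → ℝ) : ℕ → ℕ → ℝ := fun i j => (g i (j + 1) - g i j) / hy

/-- `[D_x w]_{i,j} = (w_{i+1/2,j} - w_{i-1/2,j})/h_x` for an x-edge array `w`. -/
noncomputable def DX (hx : ℝ) (w : ℕ → ℕ → ℝ) : ℕ → ℕ → ℝ := fun i j => (w i j - w (i - 1) j) / hx

/-- `[D_y w]_{i,j} = (w_{i,j+1/2} - w_{i,j-1/2})/h_y` for a y-edge array `w`. -/
noncomputable def DY (hy : ℝ) (w : ℕ → ℕ → ℝ) : ℕ → ℕ → ℝ := fun i j => (w i j - w i (j - 1)) / hy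

/-- Five-point discrete Laplacian `[Δ_h g]_{i,j}` (meaningful at interior cells). -/
noncomputable def lapH (hx hy : ℝ) (g : ℕ → ℕ → ℝ) : ℕ → ℕ → ℝ := fun i j =>
  (g (i + 1) j - 2 * g i j + g (i - 1) j) / hx ^ 2 +
  (g i (j + 1) - 2 * g i j + g i (j - 1)) / hy ^ 2

/-- The discrete homogeneous Neumann boundary condition for a grid function. -/
noncomputable def NeumannBC (Nx Ny : ℕ) (g : ℕ → ℕ → ℝ) : Prop :=
  (∀ j ∈ Finset.Icc 1 Ny, g 0 j = g 1 j ∧ g (Nx + 1) j = g Nx j) ∧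
  (∀ i ∈ Finset.Icc 1 Nx, g i 0 = g i 1 ∧ g i (Ny + 1) = g i Ny)

/-- Extension of interior data to ghost cells via the discrete Neumann BC
(clamping of indices to the interior range). -/
noncomputable def extN (Nx Ny : ℕ) (u : ℕ → ℕ → ℝ) : ℕ → ℕ → ℝ := fun i j =>
  u (min (max i 1) Nx) (min (max j 1) Ny)

/-- `‖∇_h g‖² = (d_x g, d_x g)_x + (d_y g, d_y g)_y`. -/
noncomputable def gradSq (Nx Ny : ℕ) (hx hy : ℝ) (g : ℕ → ℕ → ℝ) : ℝ :=
  innerX Nx Ny hx hy (dX hx g) (dX hx g) + innerY Nx Ny hx hy (dY hy g) (dY hy g)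

/-- `Δ_h² g`, where `Δ_h g` is extended to ghost cells via its own Neumann BC. -/
noncomputable def lap2H (Nx Ny : ℕ) (hx hy : ℝ) (g : ℕ → ℕ → ℝ) : ℕ → ℕ → ℝ :=
  lapH hx hy (extN Nx Ny (lapH hx hy g))

/-- `Δ_h³ g`, where `Δ_h g`, `Δ_h² g` are extended to ghost cells via their own Neumann BC. -/
noncomputable def lap3H (Nx Ny : ℕ) (hx hy : ℝ) (g : ℕ → ℕ → ℝ) : ℕ → ℕ → ℝ :=
  lapH hx hy (extN Nx Ny (lap2H Nx Ny hx hy g))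

/-- Discrete energy `E_1^h(g) = Σ h_x h_y F(g_{ij})` with `F(s) = s⁴/4`. -/
noncomputable def E1h (Nx Ny : ℕ) (hx hy : ℝ) (g : ℕ → ℕ → ℝ) : ℝ :=
  ∑ i ∈ Finset.Icc 1 Nx, ∑ j ∈ Finset.Icc 1 Ny, hx * hy * (g i j ^ 4 / 4)

/-- Interior grid data `(i = 1,...,Nx, j = 1,...,Ny)` viewed as a grid function
(arbitrary value `0` outside the interior range). -/
noncomputable def toGrid (Nx Ny : ℕ) (v : Fin Nx → Fin Ny → ℝ) : ℕ → ℕ → ℝ := fun i j =>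
  if h : 1 ≤ i ∧ i ≤ Nx ∧ 1 ≤ j ∧ j ≤ Ny then
    v ⟨i - 1, by omega⟩ ⟨j - 1, by omega⟩ else 0

/-- The discrete inner product `(·,·)_m` on interior grid data. -/
noncomputable def innerV (Nx Ny : ℕ) (hx hy : ℝ) (v w : Fin Nx → Fin Ny → ℝ) : ℝ :=
  ∑ i : Fin Nx, ∑ j : Fin Ny, hx * hy * v i j * w i j


lemma myFinSumIcc (N : ℕ) (f : ℕ → ℝ) :
    ∑ i : Fin N, f ((i : ℕ) + 1) = ∑ i ∈ Finset.Icc 1 N, f i := by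
  rw [Fin.sum_univ_eq_sum_range (fun i => f (i + 1)), ← Finset.Ico_add_one_right_eq_Icc,
    Finset.sum_Ico_eq_sum_range]
  simp only [Nat.add_sub_cancel, Nat.succ_sub_one]
  exact Finset.sum_congr rfl fun i _ => by rw [add_comm]

lemma myAbelSum (g w : ℕ → ℝ) :
    ∀ N, 1 ≤ N →
    ∑ i ∈ Finset.Icc 1 N, (g (i + 1) - 2 * g i + g (i - 1)) * w i
      = (g (N + 1) - g N) * w N - (g 1 - g 0) * w 1
        - ∑ i ∈ Finset.Icc 1 (N - 1), (g (i + 1) - g i) * (w (i + 1) - w i) := by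
  intro N
  induction N with
  | zero => omega
  | succ n ih =>
    intro _
    rcases Nat.eq_zero_or_pos n with hn | hn
    · subst hn; simp; ring
    · obtain ⟨m, rfl⟩ : ∃ m, n = m + 1 := ⟨n - 1, by omega⟩
      rw [Finset.sum_Icc_succ_top (by omega : 1 ≤ m + 1 + 1)]
      rw [ih (by omega)]
      simp only [Nat.add_sub_cancel]
      rw [Finset.sum_Icc_succ_top (by omega : 1 ≤ m + 1)]
      ring

lemma mySbp1 (N : ℕ) (hN : 1 ≤ N) (g w : ℕ → ℝ) (h0 : g 0 = g 1) (h1 : g (N + 1) = g N) :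
    ∑ i ∈ Finset.Icc 1 N, (g (i + 1) - 2 * g i + g (i - 1)) * w i
      = -∑ i ∈ Finset.Icc 1 (N - 1), (g (i + 1) - g i) * (w (i + 1) - w i) := by
  rw [myAbelSum g w N hN, h0, h1]; ring

lemma myLapForm (Nx Ny : ℕ) (hNx : 1 ≤ Nx) (hNy : 1 ≤ Ny) (hx hy : ℝ)
    (g h : ℕ → ℕ → ℝ)
    (hgx : ∀ j ∈ Finset.Icc 1 Ny, g 0 j = g 1 j ∧ g (Nx + 1) j = g Nx j)
    (hgy : ∀ i ∈ Finset.Icc 1 Nx, g i 0 = g i 1 ∧ g i (Ny + 1) = g i Ny) :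
    ∑ i ∈ Finset.Icc 1 Nx, ∑ j ∈ Finset.Icc 1 Ny, lapH hx hy g i j * h i j
    = -((∑ j ∈ Finset.Icc 1 Ny, ∑ i ∈ Finset.Icc 1 (Nx - 1),
          (g (i + 1) j - g i j) * (h (i + 1) j - h i j)) / hx ^ 2
      + (∑ i ∈ Finset.Icc 1 Nx, ∑ j ∈ Finset.Icc 1 (Ny - 1),
          (g i (j + 1) - g i j) * (h i (j + 1) - h i j)) / hy ^ 2) := by
  have split : ∀ i j, lapH hx hy g i j * h i j
      = ((g (i + 1) j - 2 * g i j + g (i - 1) j) * h i j) / hx ^ 2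
        + ((g i (j + 1) - 2 * g i j + g i (j - 1)) * h i j) / hy ^ 2 := by
    intro i j; simp only [lapH]; ring
  simp only [split, Finset.sum_add_distrib]
  have h1 : ∑ i ∈ Finset.Icc 1 Nx, ∑ j ∈ Finset.Icc 1 Ny,
      ((g (i + 1) j - 2 * g i j + g (i - 1) j) * h i j) / hx ^ 2
      = -(∑ j ∈ Finset.Icc 1 Ny, ∑ i ∈ Finset.Icc 1 (Nx - 1),
          (g (i + 1) j - g i j) * (h (i + 1) j - h i j)) / hx ^ 2 := by
    rw [Finset.sum_comm]
    calc ∑ j ∈ Finset.Icc 1 Ny, ∑ i ∈ Finset.Icc 1 Nx,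
        ((g (i + 1) j - 2 * g i j + g (i - 1) j) * h i j) / hx ^ 2
        = ∑ j ∈ Finset.Icc 1 Ny, (-∑ i ∈ Finset.Icc 1 (Nx - 1),
            (g (i + 1) j - g i j) * (h (i + 1) j - h i j)) / hx ^ 2 :=
          Finset.sum_congr rfl fun j hj => by
            rw [← Finset.sum_div,
              mySbp1 Nx hNx (fun i => g i j) (fun i => h i j) (hgx j hj).1 (hgx j hj).2]
      _ = -(∑ j ∈ Finset.Icc 1 Ny, ∑ i ∈ Finset.Icc 1 (Nx - 1),
            (g (i + 1) j - g i j) * (h (i + 1) j - h i j)) / hx ^ 2 := by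
          rw [← Finset.sum_div, Finset.sum_neg_distrib]
  have h2 : ∑ i ∈ Finset.Icc 1 Nx, ∑ j ∈ Finset.Icc 1 Ny,
      ((g i (j + 1) - 2 * g i j + g i (j - 1)) * h i j) / hy ^ 2
      = -(∑ i ∈ Finset.Icc 1 Nx, ∑ j ∈ Finset.Icc 1 (Ny - 1),
          (g i (j + 1) - g i j) * (h i (j + 1) - h i j)) / hy ^ 2 := by
    calc ∑ i ∈ Finset.Icc 1 Nx, ∑ j ∈ Finset.Icc 1 Ny,
        ((g i (j + 1) - 2 * g i j + g i (j - 1)) * h i j) / hy ^ 2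
        = ∑ i ∈ Finset.Icc 1 Nx, (-∑ j ∈ Finset.Icc 1 (Ny - 1),
            (g i (j + 1) - g i j) * (h i (j + 1) - h i j)) / hy ^ 2 :=
          Finset.sum_congr rfl fun i hi => by
            rw [← Finset.sum_div,
              mySbp1 Ny hNy (fun j => g i j) (fun j => h i j) (hgy i hi).1 (hgy i hi).2]
      _ = -(∑ i ∈ Finset.Icc 1 Nx, ∑ j ∈ Finset.Icc 1 (Ny - 1),
            (g i (j + 1) - g i j) * (h i (j + 1) - h i j)) / hy ^ 2 := by
          rw [← Finset.sum_div, Finset.sum_neg_distrib]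
  rw [h1, h2]; ring




lemma myExtBC (Nx Ny : ℕ) (hNx : 1 ≤ Nx) (hNy : 1 ≤ Ny) (u : ℕ → ℕ → ℝ) :
    (∀ j, extN Nx Ny u 0 j = extN Nx Ny u 1 j ∧ extN Nx Ny u (Nx + 1) j = extN Nx Ny u Nx j) ∧
    (∀ i, extN Nx Ny u i 0 = extN Nx Ny u i 1 ∧ extN Nx Ny u i (Ny + 1) = extN Nx Ny u i Ny) := by
  refine ⟨fun j => ⟨?_, ?_⟩, fun i => ⟨?_, ?_⟩⟩ <;> unfold extN <;> congr 1 <;> omega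

lemma myExtEval (Nx Ny : ℕ) (w : Fin Nx → Fin Ny → ℝ) (i : Fin Nx) (j : Fin Ny) :
    extN Nx Ny (toGrid Nx Ny w) ((i : ℕ) + 1) ((j : ℕ) + 1) = w i j := by
  have hi := i.isLt; have hj := j.isLt
  unfold extN toGrid
  rw [show min (max ((i : ℕ) + 1) 1) Nx = (i : ℕ) + 1 by omega,
    show min (max ((j : ℕ) + 1) 1) Ny = (j : ℕ) + 1 by omega,
    dif_pos (by omega : 1 ≤ (i : ℕ) + 1 ∧ (i : ℕ) + 1 ≤ Nx ∧ 1 ≤ (j : ℕ) + 1 ∧ (j : ℕ) + 1 ≤ Ny)]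
  simp only [Nat.add_sub_cancel, Fin.eta]

set_option maxHeartbeats 2000000 in
/-- Negative semidefiniteness of `A⁻¹Δ_h`: with `T` the map `u ↦ Δ_h(ext u)` on
interior grid data and `A = cI - (M/2)T³ - (Mα/2)T`, `c = 2/Δt² + β/Δt`,
the operator `A` is invertible and `(A⁻¹(T b), b)_m ≤ 0` for every `b`. -/
theorem inverse_A_lap_negative_semidefinite
    (Nx Ny : ℕ) (hNx : 1 ≤ Nx) (hNy : 1 ≤ Ny)
    (hx hy : ℝ) (hhx : 0 < hx) (hhy : 0 < hy)
    (Δt M β α c : ℝ) (hΔt : 0 < Δt) (hM : 0 < M) (hβ : 0 ≤ β) (hα : 0 ≤ α)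
    (hc : c = 2 / Δt ^ 2 + β / Δt)
    (T : Module.End ℝ (Fin Nx → Fin Ny → ℝ))
    (hT : ∀ (v : Fin Nx → Fin Ny → ℝ) (i : Fin Nx) (j : Fin Ny),
      T v i j = lapH hx hy (extN Nx Ny (toGrid Nx Ny v)) ((i : ℕ) + 1) ((j : ℕ) + 1))
    (A : Module.End ℝ (Fin Nx → Fin Ny → ℝ))
    (hA : A = c • (1 : Module.End ℝ (Fin Nx → Fin Ny → ℝ)) - (M / 2) • T ^ 3
        - (M * α / 2) • T) :
    Function.Bijective A ∧
    ∀ b z : Fin Nx → Fin Ny → ℝ, A z = T b → innerV Nx Ny hx hy z b ≤ 0 := by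
  classical
  set ip : (Fin Nx → Fin Ny → ℝ) → (Fin Nx → Fin Ny → ℝ) → ℝ := innerV Nx Ny hx hy with hip
  have hc0 : 0 < c := by
    rw [hc]; have : 0 < Δt ^ 2 := by positivity
    have : (0:ℝ) < 2 / Δt ^ 2 := by positivity
    have : (0:ℝ) ≤ β / Δt := by positivity
    linarith
  have ipsym : ∀ x y : Fin Nx → Fin Ny → ℝ, ip x y = ip y x := fun x y =>
    Finset.sum_congr rfl fun i _ => Finset.sum_congr rfl fun j _ => by ring
  have ipnn : ∀ x : Fin Nx → Fin Ny → ℝ, 0 ≤ ip x x := fun x =>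
    Finset.sum_nonneg fun i _ => Finset.sum_nonneg fun j _ => by
      have := mul_self_nonneg (x i j); nlinarith [mul_pos hhx hhy]
  have ipzero : ∀ x : Fin Nx → Fin Ny → ℝ, ip x x = 0 → x = 0 := by
    intro x hx0
    have h1 : ∀ i ∈ Finset.univ (α := Fin Nx), ∀ j ∈ Finset.univ (α := Fin Ny),
        hx * hy * x i j * x i j = 0 := by
      have := (Finset.sum_eq_zero_iff_of_nonneg (fun i _ =>
        Finset.sum_nonneg fun j _ => by
          have := mul_self_nonneg (x i j); nlinarith [mul_pos hhx hhy])).mp hx0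
      intro i hi
      exact (Finset.sum_eq_zero_iff_of_nonneg (fun j _ => by
        have := mul_self_nonneg (x i j); nlinarith [mul_pos hhx hhy])).mp (this i hi)
    funext i j
    have := h1 i (Finset.mem_univ i) j (Finset.mem_univ j)
    have hxy : 0 < hx * hy := mul_pos hhx hhy
    have : x i j * x i j = 0 := by
      by_contra hne
      exact hne (by nlinarith [mul_self_nonneg (x i j)])
    simpa [Pi.zero_apply] using mul_self_eq_zero.mp this
  set E : (Fin Nx → Fin Ny → ℝ) → ℕ → ℕ → ℝ := fun w => extN Nx Ny (toGrid Nx Ny w) with hE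
  have hform : ∀ u v : Fin Nx → Fin Ny → ℝ, ip (T u) v = hx * hy *
      -((∑ j ∈ Finset.Icc 1 Ny, ∑ i ∈ Finset.Icc 1 (Nx - 1),
          (E u (i + 1) j - E u i j) * (E v (i + 1) j - E v i j)) / hx ^ 2
        + (∑ i ∈ Finset.Icc 1 Nx, ∑ j ∈ Finset.Icc 1 (Ny - 1),
          (E u i (j + 1) - E u i j) * (E v i (j + 1) - E v i j)) / hy ^ 2) := by
    intro u v
    have e1 : ip (T u) v = hx * hy * ∑ i : Fin Nx, ∑ j : Fin Ny,
        lapH hx hy (E u) ((i : ℕ) + 1) ((j : ℕ) + 1) * E v ((i : ℕ) + 1) ((j : ℕ) + 1) := by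
      simp only [hip, innerV]
      rw [Finset.mul_sum]
      refine Finset.sum_congr rfl fun i _ => ?_
      rw [Finset.mul_sum]
      refine Finset.sum_congr rfl fun j _ => ?_
      rw [hT, ← myExtEval Nx Ny v i j]
      simp only [hE]
      ring
    have e2 : (∑ i : Fin Nx, ∑ j : Fin Ny,
        lapH hx hy (E u) ((i : ℕ) + 1) ((j : ℕ) + 1) * E v ((i : ℕ) + 1) ((j : ℕ) + 1))
        = ∑ i ∈ Finset.Icc 1 Nx, ∑ j ∈ Finset.Icc 1 Ny, lapH hx hy (E u) i j * E v i j := by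
      rw [← myFinSumIcc Nx (fun a => ∑ j ∈ Finset.Icc 1 Ny, lapH hx hy (E u) a j * E v a j)]
      exact Finset.sum_congr rfl fun i _ =>
        myFinSumIcc Ny (fun b => lapH hx hy (E u) ((i : ℕ) + 1) b * E v ((i : ℕ) + 1) b)
    rw [e1, e2, myLapForm Nx Ny hNx hNy hx hy (E u) (E v)
      (fun j _ => (myExtBC Nx Ny hNx hNy (toGrid Nx Ny u)).1 j)
      (fun i _ => (myExtBC Nx Ny hNx hNy (toGrid Nx Ny u)).2 i)]
  have hTsym : ∀ u v : Fin Nx → Fin Ny → ℝ, ip (T u) v = ip (T v) u := by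
    intro u v
    rw [hform u v, hform v u]
    have e1 : (∑ j ∈ Finset.Icc 1 Ny, ∑ i ∈ Finset.Icc 1 (Nx - 1),
        (E u (i + 1) j - E u i j) * (E v (i + 1) j - E v i j))
        = ∑ j ∈ Finset.Icc 1 Ny, ∑ i ∈ Finset.Icc 1 (Nx - 1),
        (E v (i + 1) j - E v i j) * (E u (i + 1) j - E u i j) :=
      Finset.sum_congr rfl fun j _ => Finset.sum_congr rfl fun i _ => by ring
    have e2 : (∑ i ∈ Finset.Icc 1 Nx, ∑ j ∈ Finset.Icc 1 (Ny - 1),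
        (E u i (j + 1) - E u i j) * (E v i (j + 1) - E v i j))
        = ∑ i ∈ Finset.Icc 1 Nx, ∑ j ∈ Finset.Icc 1 (Ny - 1),
        (E v i (j + 1) - E v i j) * (E u i (j + 1) - E u i j) :=
      Finset.sum_congr rfl fun i _ => Finset.sum_congr rfl fun j _ => by ring
    rw [e1, e2]
  have hTneg : ∀ u : Fin Nx → Fin Ny → ℝ, ip (T u) u ≤ 0 := by
    intro u
    rw [hform u u]
    have s1 : 0 ≤ ∑ j ∈ Finset.Icc 1 Ny, ∑ i ∈ Finset.Icc 1 (Nx - 1),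
        (E u (i + 1) j - E u i j) * (E u (i + 1) j - E u i j) :=
      Finset.sum_nonneg fun j _ => Finset.sum_nonneg fun i _ => mul_self_nonneg _
    have s2 : 0 ≤ ∑ i ∈ Finset.Icc 1 Nx, ∑ j ∈ Finset.Icc 1 (Ny - 1),
        (E u i (j + 1) - E u i j) * (E u i (j + 1) - E u i j) :=
      Finset.sum_nonneg fun i _ => Finset.sum_nonneg fun j _ => mul_self_nonneg _
    have hx2 : (0:ℝ) < hx ^ 2 := by positivity
    have hy2 : (0:ℝ) < hy ^ 2 := by positivity
    have hd : 0 ≤ (∑ j ∈ Finset.Icc 1 Ny, ∑ i ∈ Finset.Icc 1 (Nx - 1),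
        (E u (i + 1) j - E u i j) * (E u (i + 1) j - E u i j)) / hx ^ 2
        + (∑ i ∈ Finset.Icc 1 Nx, ∑ j ∈ Finset.Icc 1 (Ny - 1),
        (E u i (j + 1) - E u i j) * (E u i (j + 1) - E u i j)) / hy ^ 2 := by
      have := div_nonneg s1 (le_of_lt hx2)
      have := div_nonneg s2 (le_of_lt hy2)
      linarith
    have hxy : (0:ℝ) < hx * hy := mul_pos hhx hhy
    nlinarith
  have hAapp : ∀ x : Fin Nx → Fin Ny → ℝ, A x = c • x - (M / 2) • T (T (T x)) - (M * α / 2) • T x := by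
    intro x
    rw [hA]
    simp [pow_succ, Module.End.mul_apply, LinearMap.sub_apply, LinearMap.smul_apply,
      Module.End.one_apply]
  have hlin : ∀ x w : Fin Nx → Fin Ny → ℝ, ip (A x) w
      = c * ip x w - (M / 2) * ip (T (T (T x))) w - (M * α / 2) * ip (T x) w := by
    intro x w
    simp only [hip, innerV]
    rw [Finset.mul_sum, Finset.mul_sum, Finset.mul_sum, ← Finset.sum_sub_distrib,
      ← Finset.sum_sub_distrib]
    refine Finset.sum_congr rfl fun i _ => ?_
    rw [Finset.mul_sum, Finset.mul_sum, Finset.mul_sum, ← Finset.sum_sub_distrib,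
      ← Finset.sum_sub_distrib]
    refine Finset.sum_congr rfl fun j _ => ?_
    have hpt : (A x) i j = c * x i j - M / 2 * (T (T (T x))) i j - M * α / 2 * (T x) i j := by
      rw [hAapp]
      simp [Pi.sub_apply, Pi.smul_apply]
    rw [hpt]
    ring
  have hT3 : ∀ x : Fin Nx → Fin Ny → ℝ, ip (T (T (T x))) x = ip (T (T x)) (T x) := by
    intro x
    calc ip (T (T (T x))) x = ip (T x) (T (T x)) := hTsym (T (T x)) x
      _ = ip (T (T x)) (T x) := ipsym _ _
  have hApos : ∀ x : Fin Nx → Fin Ny → ℝ, c * ip x x ≤ ip (A x) x := by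
    intro x
    rw [hlin, hT3]
    have h1 := hTneg (T x)
    have h2 := hTneg x
    have e1 : 0 ≤ M / 2 * -ip (T (T x)) (T x) := mul_nonneg (by linarith) (by linarith)
    have e2 : 0 ≤ M * α / 2 * -ip (T x) x := mul_nonneg (by positivity) (by linarith)
    linarith
  have hinj : Function.Injective A := by
    rw [← LinearMap.ker_eq_bot]
    rw [LinearMap.ker_eq_bot']
    intro x hx0
    have h0 : ip (A x) x = 0 := by
      rw [hx0]; simp [hip, innerV]
    have := hApos x
    have := ipnn x
    have hle : c * ip x x ≤ 0 := by linarith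
    have : ip x x ≤ 0 := by
      by_contra hpos
      push_neg at hpos
      nlinarith [mul_pos hc0 hpos]
    exact ipzero x (le_antisymm this (ipnn x))
  have hsurj : Function.Surjective A := LinearMap.injective_iff_surjective.mp hinj
  refine ⟨⟨hinj, hsurj⟩, ?_⟩
  intro b z hz
  obtain ⟨y, hy'⟩ := hsurj b
  have hcommE : A * T = T * A := by
    rw [hA]
    simp only [sub_mul, mul_sub, smul_mul_assoc, mul_smul_comm, one_mul, mul_one]
    rw [← pow_succ, ← pow_succ']
  have hcomm : A (T y) = T (A y) := by
    calc A (T y) = (A * T) y := (Module.End.mul_apply A T y).symm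
      _ = (T * A) y := by rw [hcommE]
      _ = T (A y) := Module.End.mul_apply T A y
  have hzy : z = T y := hinj (by rw [hz, hcomm, hy'])
  have key : ip z b = ip (A y) (T y) := by
    rw [hzy, ← hy']; exact ipsym _ _
  have e := hlin y (T y)
  have h1 : ip y (T y) ≤ 0 := by rw [ipsym]; exact hTneg y
  have h2 : ip (T (T (T y))) (T y) = ip (T (T y)) (T (T y)) := hTsym (T (T y)) (T y)
  have h3 : 0 ≤ ip (T (T y)) (T (T y)) := ipnn _
  have h4 : 0 ≤ ip (T y) (T y) := ipnn _
  show ip z b ≤ 0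
  rw [key, e, h2]
  have e1 : 0 ≤ M / 2 * ip (T (T y)) (T (T y)) := mul_nonneg (by linarith) h3
  have e2 : 0 ≤ M * α / 2 * ip (T y) (T y) := mul_nonneg (by positivity) h4
  have e3 : c * ip y (T y) ≤ 0 := mul_nonpos_of_nonneg_of_nonpos hc0.le h1
  linarith
end

section
/- Theorem 3.1, unique solvability part: Let Δt > 0, M > 0, β > 0, α ≥ 0. Let Z^{n-1}, Z^n be grid functions such that Z^n and Δ_h Z^n satisfy the discrete Neumann BC, let W^n be a grid function satisfying the discrete Neumann BC, let Ψ^n be a grid function, R^n a real number, and assume E_1^h(Z̃^{n+1/2}) > 0 where Z̃^{n+1/2} = (3Z^n - Z^{n-1})/2. Then there exists a unique tuple (Z^{n+1}, W^{n+1}, R^{n+1}, Ψ^{n+1}), where Z^{n+1} and W^{n+1} are grid functions such that Z^{n+1}, Δ_h Z^{n+1} and W^{n+1} satisfy the discrete Neumann BC, Ψ^{n+1} is determined at interior cells, and R^{n+1} ∈ ℝ, satisfying at all interior cells: (i) Ψ^{n+1} - Ψ^n + βΔt Ψ^{n+1/2} = MΔt Δ_h W^{n+1/2}; (ii) Δt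 Ψ^{n+1/2} = Z^{n+1} - Z^n; (iii) W^{n+1/2} = Δ_h^2 Z^{n+1/2} + 2Δ_h Z̃^{n+1/2} + α Z^{n+1/2} + (R^{n+1/2}/√(E_1^h(Z̃^{n+1/2}))) F'(Z̃^{n+1/2}); (iv) R^{n+1} - R^n = (1/(2√(E_1^h(Z̃^{n+1/2})))) (F'(Z̃^{n+1/2}), Z^{n+1} - Z^n)_m; where f^{n+1/2} = (f^{n+1} + f^n)/2 for f = Z, W, Ψ, R. -/
open Finset

section AuxCHNS

lemma abel1 (N : ℕ) (hN : 1 ≤ N) (u v : ℕ → ℝ) :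
    ∑ i ∈ Finset.Icc 1 N, (u (i+1) - 2*u i + u (i-1)) * v i
      = (u (N+1) - u N) * v N - (u 1 - u 0) * v 1
        - ∑ i ∈ Finset.Icc 1 (N-1), (u (i+1) - u i) * (v (i+1) - v i) := by
  induction N, hN using Nat.le_induction with
  | base => simp; ring
  | succ n hn ih =>
      rw [Finset.sum_Icc_succ_top (by omega : 1 ≤ n + 1), ih]
      have h1 : n + 1 - 1 = n := by omega
      obtain ⟨m, rfl⟩ : ∃ m, n = m + 1 := ⟨n - 1, by omega⟩
      rw [h1, Finset.sum_Icc_succ_top (by omega : 1 ≤ m + 1)]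
      simp only [Nat.add_sub_cancel]
      ring

lemma sbp1 (N : ℕ) (hN : 1 ≤ N) (u v : ℕ → ℝ) (h0 : u 0 = u 1) (h1 : u (N+1) = u N) :
    ∑ i ∈ Finset.Icc 1 N, (u (i+1) - 2*u i + u (i-1)) * v i
      = - ∑ i ∈ Finset.Icc 1 (N-1), (u (i+1) - u i) * (v (i+1) - v i) := by
  rw [abel1 N hN, h0, h1]; ring

lemma sbp2 (Nx Ny : ℕ) (hNx : 1 ≤ Nx) (hNy : 1 ≤ Ny) (hx hy : ℝ)
    (hhx : hx ≠ 0) (hhy : hy ≠ 0) (u v : ℕ → ℕ → ℝ) (hu : NeumannBC Nx Ny u) :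
    innerM Nx Ny hx hy (lapH hx hy u) v
      = -(innerX Nx Ny hx hy (dX hx u) (dX hx v) + innerY Nx Ny hx hy (dY hy u) (dY hy v)) := by
  have key : innerM Nx Ny hx hy (lapH hx hy u) v =
      (∑ j ∈ Finset.Icc 1 Ny, ∑ i ∈ Finset.Icc 1 Nx,
        (hy/hx) * ((u (i+1) j - 2*u i j + u (i-1) j) * v i j))
      + ∑ i ∈ Finset.Icc 1 Nx, ∑ j ∈ Finset.Icc 1 Ny,
        (hx/hy) * ((u i (j+1) - 2*u i j + u i (j-1)) * v i j) := by
    rw [Finset.sum_comm (s := Finset.Icc 1 Ny)]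
    rw [← Finset.sum_add_distrib]
    unfold innerM
    refine Finset.sum_congr rfl fun i _ => ?_
    rw [← Finset.sum_add_distrib]
    refine Finset.sum_congr rfl fun j _ => ?_
    unfold lapH
    field_simp
  rw [key]
  have hXpart : ∑ j ∈ Finset.Icc 1 Ny, ∑ i ∈ Finset.Icc 1 Nx,
      (hy/hx) * ((u (i+1) j - 2*u i j + u (i-1) j) * v i j)
      = - innerX Nx Ny hx hy (dX hx u) (dX hx v) := by
    have perj : ∀ j ∈ Finset.Icc 1 Ny,
        ∑ i ∈ Finset.Icc 1 Nx, (hy/hx) * ((u (i+1) j - 2*u i j + u (i-1) j) * v i j)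
        = - ∑ i ∈ Finset.Icc 1 (Nx-1),
            hx * hy * ((u (i+1) j - u i j)/hx) * ((v (i+1) j - v i j)/hx) := by
      intro j hj
      rw [← Finset.mul_sum,
        sbp1 Nx hNx (fun i => u i j) (fun i => v i j) (hu.1 j hj).1 (hu.1 j hj).2]
      rw [mul_neg, neg_inj, Finset.mul_sum]
      refine Finset.sum_congr rfl fun i _ => ?_
      field_simp
    rw [Finset.sum_congr rfl perj, Finset.sum_neg_distrib, neg_inj, Finset.sum_comm]
    rfl
  have hYpart : ∑ i ∈ Finset.Icc 1 Nx, ∑ j ∈ Finset.Icc 1 Ny,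
      (hx/hy) * ((u i (j+1) - 2*u i j + u i (j-1)) * v i j)
      = - innerY Nx Ny hx hy (dY hy u) (dY hy v) := by
    have peri : ∀ i ∈ Finset.Icc 1 Nx,
        ∑ j ∈ Finset.Icc 1 Ny, (hx/hy) * ((u i (j+1) - 2*u i j + u i (j-1)) * v i j)
        = - ∑ j ∈ Finset.Icc 1 (Ny-1),
            hx * hy * ((u i (j+1) - u i j)/hy) * ((v i (j+1) - v i j)/hy) := by
      intro i hi
      rw [← Finset.mul_sum,
        sbp1 Ny hNy (fun j => u i j) (fun j => v i j) (hu.2 i hi).1 (hu.2 i hi).2]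
      rw [mul_neg, neg_inj, Finset.mul_sum]
      refine Finset.sum_congr rfl fun j _ => ?_
      field_simp
    rw [Finset.sum_congr rfl peri, Finset.sum_neg_distrib, neg_inj]
    rfl
  rw [hXpart, hYpart]; ring


lemma extN_interior (Nx Ny : ℕ) (u : ℕ → ℕ → ℝ) :
    ∀ i ∈ Finset.Icc 1 Nx, ∀ j ∈ Finset.Icc 1 Ny, extN Nx Ny u i j = u i j := by
  intro i hi j hj
  simp only [Finset.mem_Icc] at hi hj
  unfold extN
  congr 1 <;> omega

lemma extN_neumann (Nx Ny : ℕ) (hNx : 1 ≤ Nx) (hNy : 1 ≤ Ny) (u : ℕ → ℕ → ℝ) :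
    NeumannBC Nx Ny (extN Nx Ny u) := by
  constructor
  · intro j hj
    unfold extN
    constructor <;> · congr 1 <;> omega
  · intro i hi
    unfold extN
    constructor <;> · congr 1 <;> omega

lemma innerX_comm (Nx Ny : ℕ) (hx hy : ℝ) (u v : ℕ → ℕ → ℝ) :
    innerX Nx Ny hx hy u v = innerX Nx Ny hx hy v u := by
  unfold innerX
  exact Finset.sum_congr rfl fun i _ => Finset.sum_congr rfl fun j _ => by ring

lemma innerY_comm (Nx Ny : ℕ) (hx hy : ℝ) (u v : ℕ → ℕ → ℝ) :
    innerY Nx Ny hx hy u v = innerY Nx Ny hx hy v u := by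
  unfold innerY
  exact Finset.sum_congr rfl fun i _ => Finset.sum_congr rfl fun j _ => by ring

lemma innerM_self_nonneg (Nx Ny : ℕ) (hx hy : ℝ) (hhx : 0 < hx) (hhy : 0 < hy)
    (u : ℕ → ℕ → ℝ) : 0 ≤ innerM Nx Ny hx hy u u := by
  refine Finset.sum_nonneg fun i _ => Finset.sum_nonneg fun j _ => ?_
  have : hx * hy * u i j * u i j = (hx * hy) * (u i j)^2 := by ring
  rw [this]
  positivity

lemma innerX_self_nonneg (Nx Ny : ℕ) (hx hy : ℝ) (hhx : 0 < hx) (hhy : 0 < hy)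
    (u : ℕ → ℕ → ℝ) : 0 ≤ innerX Nx Ny hx hy u u := by
  refine Finset.sum_nonneg fun i _ => Finset.sum_nonneg fun j _ => ?_
  have : hx * hy * u i j * u i j = (hx * hy) * (u i j)^2 := by ring
  rw [this]
  positivity

lemma innerY_self_nonneg (Nx Ny : ℕ) (hx hy : ℝ) (hhx : 0 < hx) (hhy : 0 < hy)
    (u : ℕ → ℕ → ℝ) : 0 ≤ innerY Nx Ny hx hy u u := by
  refine Finset.sum_nonneg fun i _ => Finset.sum_nonneg fun j _ => ?_
  have : hx * hy * u i j * u i j = (hx * hy) * (u i j)^2 := by ring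
  rw [this]
  positivity

/-- If all x- and y-differences of `w` vanish on interior edges and `w` satisfies the
Neumann BC, then the discrete Laplacian of `w` vanishes at interior cells. -/
lemma lap_const (Nx Ny : ℕ) (hx hy : ℝ) (w : ℕ → ℕ → ℝ) (hwN : NeumannBC Nx Ny w)
    (hX : ∀ i ∈ Finset.Icc 1 (Nx-1), ∀ j ∈ Finset.Icc 1 Ny, w (i+1) j = w i j)
    (hY : ∀ i ∈ Finset.Icc 1 Nx, ∀ j ∈ Finset.Icc 1 (Ny-1), w i (j+1) = w i j) :
    ∀ i ∈ Finset.Icc 1 Nx, ∀ j ∈ Finset.Icc 1 Ny, lapH hx hy w i j = 0 := by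
  intro i hi j hj
  have hi' := Finset.mem_Icc.mp hi
  have hj' := Finset.mem_Icc.mp hj
  have e1 : w (i+1) j = w i j := by
    rcases eq_or_lt_of_le hi'.2 with h | h
    · rw [h]; exact (hwN.1 j hj).2
    · exact hX i (Finset.mem_Icc.mpr ⟨hi'.1, by omega⟩) j hj
  have e2 : w (i-1) j = w i j := by
    rcases Nat.eq_or_lt_of_le hi'.1 with h | h
    · rw [(show i - 1 = 0 by omega), (hwN.1 j hj).1, ← h]
    · have h' := hX (i-1) (Finset.mem_Icc.mpr ⟨by omega, by omega⟩) j hj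
      rw [(show i - 1 + 1 = i by omega)] at h'
      exact h'.symm
  have e3 : w i (j+1) = w i j := by
    rcases eq_or_lt_of_le hj'.2 with h | h
    · rw [h]; exact (hwN.2 i hi).2
    · exact hY i hi j (Finset.mem_Icc.mpr ⟨hj'.1, by omega⟩)
  have e4 : w i (j-1) = w i j := by
    rcases Nat.eq_or_lt_of_le hj'.1 with h | h
    · rw [(show j - 1 = 0 by omega), (hwN.2 i hi).1, ← h]
    · have h' := hY i hi (j-1) (Finset.mem_Icc.mpr ⟨by omega, by omega⟩)
      rw [(show j - 1 + 1 = j by omega)] at h'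
      exact h'.symm
  unfold lapH
  rw [e1, e2, e3, e4]
  ring



/-- Core energy estimate: a homogeneous solution of the linearized scheme vanishes. -/
lemma core (Nx Ny : ℕ) (hNx : 1 ≤ Nx) (hNy : 1 ≤ Ny) (hx hy : ℝ) (hhx : 0 < hx) (hhy : 0 < hy)
    (f : ℕ → ℕ → ℝ) (κ α s : ℝ) (hκ : 0 < κ) (hα : 0 ≤ α) (hs : 0 < s)
    (z w : ℕ → ℕ → ℝ) (r : ℝ) (hzN : NeumannBC Nx Ny z) (hwN : NeumannBC Nx Ny w)
    (h1 : ∀ i ∈ Finset.Icc 1 Nx, ∀ j ∈ Finset.Icc 1 Ny, z i j = κ * lapH hx hy w i j)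
    (h2 : ∀ i ∈ Finset.Icc 1 Nx, ∀ j ∈ Finset.Icc 1 Ny,
      w i j = lapH hx hy (extN Nx Ny (lapH hx hy z)) i j + α * z i j + (r/s) * f i j)
    (h3 : r = 1/(2*s) * innerM Nx Ny hx hy f z) :
    (∀ i ∈ Finset.Icc 1 Nx, ∀ j ∈ Finset.Icc 1 Ny, z i j = 0 ∧ w i j = 0) ∧ r = 0 := by
  have hhx' : hx ≠ 0 := ne_of_gt hhx
  have hhy' : hy ≠ 0 := ne_of_gt hhy
  set u := extN Nx Ny (lapH hx hy z) with hu
  have huN : NeumannBC Nx Ny u := extN_neumann Nx Ny hNx hNy _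
  -- (a) innerM w z = -κ * gradSq w
  have hA : innerM Nx Ny hx hy w z
      = κ * (-(innerX Nx Ny hx hy (dX hx w) (dX hx w) + innerY Nx Ny hx hy (dY hy w) (dY hy w))) := by
    rw [← sbp2 Nx Ny hNx hNy hx hy hhx' hhy' w w hwN]
    unfold innerM
    rw [Finset.mul_sum]
    refine Finset.sum_congr rfl fun i hi => ?_
    rw [Finset.mul_sum]
    refine Finset.sum_congr rfl fun j hj => ?_
    rw [h1 i hi j hj]
    ring
  -- (b) innerM w z = innerM (lapH u) z + α innerM z z + (r/s) innerM f z
  have hB : innerM Nx Ny hx hy w z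
      = innerM Nx Ny hx hy (lapH hx hy u) z
        + (α * innerM Nx Ny hx hy z z + (r/s) * innerM Nx Ny hx hy f z) := by
    unfold innerM
    rw [Finset.mul_sum, Finset.mul_sum, ← Finset.sum_add_distrib, ← Finset.sum_add_distrib]
    refine Finset.sum_congr rfl fun i hi => ?_
    rw [Finset.mul_sum, Finset.mul_sum, ← Finset.sum_add_distrib, ← Finset.sum_add_distrib]
    refine Finset.sum_congr rfl fun j hj => ?_
    rw [h2 i hi j hj]
    ring
  -- (c)+(d): innerM (lapH u) z = Σ hxhy (lapH z)²  =: Q ≥ 0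
  have hC : innerM Nx Ny hx hy (lapH hx hy u) z = innerM Nx Ny hx hy (lapH hx hy z) u := by
    rw [sbp2 Nx Ny hNx hNy hx hy hhx' hhy' u z huN, sbp2 Nx Ny hNx hNy hx hy hhx' hhy' z u hzN,
      innerX_comm, innerY_comm]
  have hD : innerM Nx Ny hx hy (lapH hx hy z) u
      = innerM Nx Ny hx hy (lapH hx hy z) (lapH hx hy z) := by
    unfold innerM
    refine Finset.sum_congr rfl fun i hi => Finset.sum_congr rfl fun j hj => ?_
    rw [(show u i j = lapH hx hy z i j from extN_interior Nx Ny _ i hi j hj)]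
  -- (e) innerM f z = 2 s r
  have hE : innerM Nx Ny hx hy f z = 2 * s * r := by
    rw [h3]; field_simp
  -- nonnegativity
  have hQ : 0 ≤ innerM Nx Ny hx hy (lapH hx hy z) (lapH hx hy z) :=
    innerM_self_nonneg _ _ _ _ hhx hhy _
  have hZ2 : 0 ≤ innerM Nx Ny hx hy z z := innerM_self_nonneg _ _ _ _ hhx hhy _
  have hSx : 0 ≤ innerX Nx Ny hx hy (dX hx w) (dX hx w) := innerX_self_nonneg _ _ _ _ hhx hhy _
  have hSy : 0 ≤ innerY Nx Ny hx hy (dY hy w) (dY hy w) := innerY_self_nonneg _ _ _ _ hhx hhy _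
  -- combine
  have key : innerM Nx Ny hx hy (lapH hx hy z) (lapH hx hy z)
      + α * innerM Nx Ny hx hy z z + 2 * r^2
      + κ * innerX Nx Ny hx hy (dX hx w) (dX hx w)
      + κ * innerY Nx Ny hx hy (dY hy w) (dY hy w) = 0 := by
    have heq := hA.symm.trans hB
    rw [hC, hD, hE] at heq
    have h2r : r / s * (2 * s * r) = 2 * r ^ 2 := by field_simp
    rw [h2r] at heq
    linear_combination -heq
  have hr : r = 0 := by
    have hr2 : r ^ 2 = 0 := le_antisymm
      (by linarith [key, mul_nonneg hκ.le hSx, mul_nonneg hκ.le hSy, mul_nonneg hα hZ2, hQ])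
      (sq_nonneg r)
    exact (pow_eq_zero_iff two_ne_zero).mp hr2
  have hSx0 : innerX Nx Ny hx hy (dX hx w) (dX hx w) = 0 := by
    have h0 : κ * innerX Nx Ny hx hy (dX hx w) (dX hx w) = 0 := le_antisymm
      (by linarith [key, mul_nonneg hκ.le hSy, mul_nonneg hα hZ2, hQ, sq_nonneg r])
      (mul_nonneg hκ.le hSx)
    exact (mul_eq_zero.mp h0).resolve_left (ne_of_gt hκ)
  have hSy0 : innerY Nx Ny hx hy (dY hy w) (dY hy w) = 0 := by
    have h0 : κ * innerY Nx Ny hx hy (dY hy w) (dY hy w) = 0 := le_antisymm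
      (by linarith [key, mul_nonneg hκ.le hSx, mul_nonneg hα hZ2, hQ, sq_nonneg r])
      (mul_nonneg hκ.le hSy)
    exact (mul_eq_zero.mp h0).resolve_left (ne_of_gt hκ)
  -- differences of w vanish
  have hXdiff : ∀ i ∈ Finset.Icc 1 (Nx-1), ∀ j ∈ Finset.Icc 1 Ny, w (i+1) j = w i j := by
    intro i hi j hj
    have hterm : ∀ i' ∈ Finset.Icc 1 (Nx-1), ∑ j' ∈ Finset.Icc 1 Ny,
        hx * hy * dX hx w i' j' * dX hx w i' j' = 0 := by
      have := (Finset.sum_eq_zero_iff_of_nonneg (fun i' _ => Finset.sum_nonneg fun j' _ => by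
        have : hx * hy * dX hx w i' j' * dX hx w i' j' = (hx*hy) * (dX hx w i' j')^2 := by ring
        rw [this]; positivity)).mp hSx0
      exact this
    have := (Finset.sum_eq_zero_iff_of_nonneg (fun j' _ => by
      have : hx * hy * dX hx w i j' * dX hx w i j' = (hx*hy) * (dX hx w i j')^2 := by ring
      rw [this]; positivity)).mp (hterm i hi) j hj
    have h0 : (hx*hy) * (dX hx w i j)^2 = 0 := by nlinarith [this]
    have : dX hx w i j = 0 := by
      have := mul_eq_zero.mp h0
      rcases this with h | h
      · exact absurd h (by positivity)
      · exact pow_eq_zero_iff (by norm_num) |>.mp h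
    unfold dX at this
    field_simp at this
    linarith
  have hYdiff : ∀ i ∈ Finset.Icc 1 Nx, ∀ j ∈ Finset.Icc 1 (Ny-1), w i (j+1) = w i j := by
    intro i hi j hj
    have hterm : ∑ j' ∈ Finset.Icc 1 (Ny-1),
        hx * hy * dY hy w i j' * dY hy w i j' = 0 := by
      have := (Finset.sum_eq_zero_iff_of_nonneg (fun i' _ => Finset.sum_nonneg fun j' _ => by
        have : hx * hy * dY hy w i' j' * dY hy w i' j' = (hx*hy) * (dY hy w i' j')^2 := by ring
        rw [this]; positivity)).mp hSy0
      exact this i hi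
    have := (Finset.sum_eq_zero_iff_of_nonneg (fun j' _ => by
      have : hx * hy * dY hy w i j' * dY hy w i j' = (hx*hy) * (dY hy w i j')^2 := by ring
      rw [this]; positivity)).mp hterm j hj
    have h0 : (hx*hy) * (dY hy w i j)^2 = 0 := by nlinarith [this]
    have : dY hy w i j = 0 := by
      rcases mul_eq_zero.mp h0 with h | h
      · exact absurd h (by positivity)
      · exact pow_eq_zero_iff (by norm_num) |>.mp h
    unfold dY at this
    field_simp at this
    linarith
  have hlapw : ∀ i ∈ Finset.Icc 1 Nx, ∀ j ∈ Finset.Icc 1 Ny, lapH hx hy w i j = 0 :=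
    lap_const Nx Ny hx hy w hwN hXdiff hYdiff
  have hz0 : ∀ i ∈ Finset.Icc 1 Nx, ∀ j ∈ Finset.Icc 1 Ny, z i j = 0 := by
    intro i hi j hj
    rw [h1 i hi j hj, hlapw i hi j hj, mul_zero]
  -- lapH z vanishes at interior cells
  have hlapz : ∀ i ∈ Finset.Icc 1 Nx, ∀ j ∈ Finset.Icc 1 Ny, lapH hx hy z i j = 0 := by
    intro i hi j hj
    have hi' := Finset.mem_Icc.mp hi
    have hj' := Finset.mem_Icc.mp hj
    have e0 : z i j = 0 := hz0 i hi j hj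
    have e1 : z (i+1) j = 0 := by
      rcases eq_or_lt_of_le hi'.2 with h | h
      · rw [h, (hzN.1 j hj).2]; exact hz0 Nx (Finset.mem_Icc.mpr ⟨hNx, le_refl _⟩) j hj
      · exact hz0 (i+1) (Finset.mem_Icc.mpr ⟨by omega, by omega⟩) j hj
    have e2 : z (i-1) j = 0 := by
      rcases Nat.eq_or_lt_of_le hi'.1 with h | h
      · rw [(show i - 1 = 0 by omega), (hzN.1 j hj).1]
        exact hz0 1 (Finset.mem_Icc.mpr ⟨le_refl _, hNx⟩) j hj
      · exact hz0 (i-1) (Finset.mem_Icc.mpr ⟨by omega, by omega⟩) j hj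
    have e3 : z i (j+1) = 0 := by
      rcases eq_or_lt_of_le hj'.2 with h | h
      · rw [h, (hzN.2 i hi).2]; exact hz0 i hi Ny (Finset.mem_Icc.mpr ⟨hNy, le_refl _⟩)
      · exact hz0 i hi (j+1) (Finset.mem_Icc.mpr ⟨by omega, by omega⟩)
    have e4 : z i (j-1) = 0 := by
      rcases Nat.eq_or_lt_of_le hj'.1 with h | h
      · rw [(show j - 1 = 0 by omega), (hzN.2 i hi).1]
        exact hz0 i hi 1 (Finset.mem_Icc.mpr ⟨le_refl _, hNy⟩)
      · exact hz0 i hi (j-1) (Finset.mem_Icc.mpr ⟨by omega, by omega⟩)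
    unfold lapH
    rw [e0, e1, e2, e3, e4]
    ring
  have hu0 : ∀ i j, u i j = 0 := by
    intro i j
    have h1m : min (max i 1) Nx ∈ Finset.Icc 1 Nx := Finset.mem_Icc.mpr ⟨by omega, by omega⟩
    have h2m : min (max j 1) Ny ∈ Finset.Icc 1 Ny := Finset.mem_Icc.mpr ⟨by omega, by omega⟩
    show extN Nx Ny (lapH hx hy z) i j = 0
    unfold extN
    exact hlapz (min (max i 1) Nx) h1m (min (max j 1) Ny) h2m
  have hw0 : ∀ i ∈ Finset.Icc 1 Nx, ∀ j ∈ Finset.Icc 1 Ny, w i j = 0 := by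
    intro i hi j hj
    rw [h2 i hi j hj, hz0 i hi j hj, hr]
    unfold lapH
    rw [hu0, hu0, hu0, hu0, hu0]
    ring
  exact ⟨fun i hi j hj => ⟨hz0 i hi j hj, hw0 i hi j hj⟩, hr⟩


-- plain encode/decode
noncomputable def ofVfun (Nx Ny : ℕ) (v : Fin Nx × Fin Ny → ℝ) : ℕ → ℕ → ℝ := fun i j =>
  if h : 1 ≤ i ∧ i ≤ Nx ∧ 1 ≤ j ∧ j ≤ Ny then v (⟨i-1, by omega⟩, ⟨j-1, by omega⟩) else 0
noncomputable def toVfun (Nx Ny : ℕ) (g : ℕ → ℕ → ℝ) : Fin Nx × Fin Ny → ℝ := fun p =>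
  g ((p.1 : ℕ) + 1) ((p.2 : ℕ) + 1)

lemma innerM_add₂ (Nx Ny : ℕ) (hx hy : ℝ) (f u v : ℕ → ℕ → ℝ) :
    innerM Nx Ny hx hy f (u + v) = innerM Nx Ny hx hy f u + innerM Nx Ny hx hy f v := by
  unfold innerM
  rw [← Finset.sum_add_distrib]
  refine Finset.sum_congr rfl fun i _ => ?_
  rw [← Finset.sum_add_distrib]
  refine Finset.sum_congr rfl fun j _ => ?_
  simp [Pi.add_apply]; ring

lemma innerM_smul₂ (Nx Ny : ℕ) (hx hy : ℝ) (c : ℝ) (f u : ℕ → ℕ → ℝ) :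
    innerM Nx Ny hx hy f (c • u) = c * innerM Nx Ny hx hy f u := by
  unfold innerM
  rw [Finset.mul_sum]
  refine Finset.sum_congr rfl fun i _ => ?_
  rw [Finset.mul_sum]
  refine Finset.sum_congr rfl fun j _ => ?_
  simp [Pi.smul_apply, smul_eq_mul]; ring

lemma innerM_sub_fun (Nx Ny : ℕ) (hx hy : ℝ) (f a b : ℕ → ℕ → ℝ) :
    innerM Nx Ny hx hy f (fun i j => a i j - b i j)
      = innerM Nx Ny hx hy f a - innerM Nx Ny hx hy f b := by
  unfold innerM
  rw [← Finset.sum_sub_distrib]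
  refine Finset.sum_congr rfl fun i _ => ?_
  rw [← Finset.sum_sub_distrib]
  refine Finset.sum_congr rfl fun j _ => ?_
  ring

noncomputable def lapL (hx hy : ℝ) : (ℕ → ℕ → ℝ) →ₗ[ℝ] (ℕ → ℕ → ℝ) where
  toFun := lapH hx hy
  map_add' u v := by funext i j; simp only [lapH, Pi.add_apply]; ring
  map_smul' c u := by funext i j; simp only [lapH, Pi.smul_apply, smul_eq_mul, RingHom.id_apply]; ring

noncomputable def extL (Nx Ny : ℕ) : (ℕ → ℕ → ℝ) →ₗ[ℝ] (ℕ → ℕ → ℝ) where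
  toFun := extN Nx Ny
  map_add' u v := by funext i j; simp only [extN, Pi.add_apply]
  map_smul' c u := by funext i j; simp only [extN, Pi.smul_apply, smul_eq_mul, RingHom.id_apply]

noncomputable def rankOneL (Nx Ny : ℕ) (hx hy : ℝ) (f : ℕ → ℕ → ℝ) :
    (ℕ → ℕ → ℝ) →ₗ[ℝ] (ℕ → ℕ → ℝ) where
  toFun g := fun i j => innerM Nx Ny hx hy f g * f i j
  map_add' u v := by funext i j; simp only [innerM_add₂, Pi.add_apply]; ring
  map_smul' c u := by funext i j; simp only [innerM_smul₂, Pi.smul_apply, smul_eq_mul, RingHom.id_apply]; ring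

noncomputable def ofVL (Nx Ny : ℕ) : (Fin Nx × Fin Ny → ℝ) →ₗ[ℝ] (ℕ → ℕ → ℝ) where
  toFun := ofVfun Nx Ny
  map_add' u v := by funext i j; simp only [ofVfun, Pi.add_apply]; split <;> simp
  map_smul' c u := by
    funext i j; simp only [ofVfun, Pi.smul_apply, smul_eq_mul, RingHom.id_apply]; split <;> simp

noncomputable def toVL (Nx Ny : ℕ) : (ℕ → ℕ → ℝ) →ₗ[ℝ] (Fin Nx × Fin Ny → ℝ) where
  toFun := toVfun Nx Ny
  map_add' u v := by funext p; simp [toVfun]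
  map_smul' c u := by funext p; simp [toVfun]

noncomputable def L2op (Nx Ny : ℕ) (hx hy : ℝ) : (ℕ → ℕ → ℝ) →ₗ[ℝ] (ℕ → ℕ → ℝ) :=
  lapL hx hy ∘ₗ extL Nx Ny ∘ₗ lapL hx hy

noncomputable def WLop (Nx Ny : ℕ) (hx hy α s : ℝ) (f : ℕ → ℕ → ℝ) :
    (ℕ → ℕ → ℝ) →ₗ[ℝ] (ℕ → ℕ → ℝ) :=
  extL Nx Ny ∘ₗ ((1/2 : ℝ) • L2op Nx Ny hx hy + (α/2) • LinearMap.id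
    + ((1/(2*s))/(2*s)) • rankOneL Nx Ny hx hy f)

noncomputable def Aop (Nx Ny : ℕ) (hx hy Δt M β α s : ℝ) (f : ℕ → ℕ → ℝ) :
    (Fin Nx × Fin Ny → ℝ) →ₗ[ℝ] (Fin Nx × Fin Ny → ℝ) :=
  toVL Nx Ny ∘ₗ ((2/Δt + β) • (extL Nx Ny ∘ₗ ofVL Nx Ny)
    - (M*Δt) • (lapL hx hy ∘ₗ WLop Nx Ny hx hy α s f ∘ₗ extL Nx Ny ∘ₗ ofVL Nx Ny))

lemma WLop_eq (Nx Ny : ℕ) (hx hy α s : ℝ) (f g : ℕ → ℕ → ℝ) :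
    WLop Nx Ny hx hy α s f g = extN Nx Ny (fun a b =>
      (1/2) * lapH hx hy (extN Nx Ny (lapH hx hy g)) a b + (α/2) * g a b
        + ((1/(2*s))/(2*s)) * innerM Nx Ny hx hy f g * f a b) := by
  funext a b
  simp only [WLop, L2op, lapL, extL, rankOneL, LinearMap.coe_mk, AddHom.coe_mk,
    LinearMap.comp_apply, LinearMap.add_apply, LinearMap.smul_apply, LinearMap.id_apply,
    Pi.add_apply, Pi.smul_apply, smul_eq_mul, extN]
  ring

lemma Aop_eq (Nx Ny : ℕ) (hx hy Δt M β α s : ℝ) (f : ℕ → ℕ → ℝ) (v : Fin Nx × Fin Ny → ℝ) :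
    Aop Nx Ny hx hy Δt M β α s f v = toVfun Nx Ny (fun i j =>
      (2/Δt + β) * extN Nx Ny (ofVfun Nx Ny v) i j
        - M*Δt * lapH hx hy (WLop Nx Ny hx hy α s f (extN Nx Ny (ofVfun Nx Ny v))) i j) := by
  funext p
  simp only [Aop, toVL, toVfun, lapL, extL, ofVL, LinearMap.coe_mk, AddHom.coe_mk,
    LinearMap.comp_apply, LinearMap.sub_apply, LinearMap.smul_apply, Pi.sub_apply,
    Pi.smul_apply, smul_eq_mul]

lemma toVfun_eq_iff (Nx Ny : ℕ) (g g' : ℕ → ℕ → ℝ) :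
    toVfun Nx Ny g = toVfun Nx Ny g'
      ↔ ∀ i ∈ Finset.Icc 1 Nx, ∀ j ∈ Finset.Icc 1 Ny, g i j = g' i j := by
  constructor
  · intro h i hi j hj
    have hi' := Finset.mem_Icc.mp hi
    have hj' := Finset.mem_Icc.mp hj
    have := congrFun h (⟨i-1, by omega⟩, ⟨j-1, by omega⟩)
    simpa [toVfun, Nat.sub_add_cancel hi'.1, Nat.sub_add_cancel hj'.1] using this
  · intro h
    funext p
    exact h _ (Finset.mem_Icc.mpr ⟨by omega, by omega⟩) _ (Finset.mem_Icc.mpr ⟨by omega, by omega⟩)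

lemma ext_ofV_at (Nx Ny : ℕ) (v : Fin Nx × Fin Ny → ℝ) (p : Fin Nx × Fin Ny) :
    extN Nx Ny (ofVfun Nx Ny v) ((p.1 : ℕ) + 1) ((p.2 : ℕ) + 1) = v p := by
  have h1 : min (max ((p.1 : ℕ)+1) 1) Nx = (p.1 : ℕ) + 1 := by
    have := p.1.isLt; omega
  have h2 : min (max ((p.2 : ℕ)+1) 1) Ny = (p.2 : ℕ) + 1 := by
    have := p.2.isLt; omega
  unfold extN
  rw [h1, h2]
  unfold ofVfun
  rw [dif_pos ⟨by omega, by have := p.1.isLt; omega, by omega, by have := p.2.isLt; omega⟩]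
  simp


lemma lapH_scale_pt (hx hy c : ℝ) (g : ℕ → ℕ → ℝ) (i j : ℕ) :
    lapH hx hy (fun a b => c * g a b) i j = c * lapH hx hy g i j := by
  simp only [lapH]; ring

lemma lapH_add_pt (hx hy : ℝ) (g h : ℕ → ℕ → ℝ) (i j : ℕ) :
    lapH hx hy (fun a b => g a b + h a b) i j = lapH hx hy g i j + lapH hx hy h i j := by
  simp only [lapH]; ring

lemma lapH_mid_diff (hx hy : ℝ) (g g' h : ℕ → ℕ → ℝ) (i j : ℕ) :
    lapH hx hy (fun a b => (g a b + h a b)/2) i j - lapH hx hy (fun a b => (g' a b + h a b)/2) i j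
      = (1/2) * lapH hx hy (fun a b => g a b - g' a b) i j := by
  simp only [lapH]; ring

lemma innerM_congr (Nx Ny : ℕ) (hx hy : ℝ) (f a b : ℕ → ℕ → ℝ) (h : ∀ i j, a i j = b i j) :
    innerM Nx Ny hx hy f a = innerM Nx Ny hx hy f b := by
  unfold innerM
  exact Finset.sum_congr rfl fun i _ => Finset.sum_congr rfl fun j _ => by rw [h i j]

lemma neumann_scale (Nx Ny : ℕ) (c : ℝ) (g : ℕ → ℕ → ℝ) (hg : NeumannBC Nx Ny g) :
    NeumannBC Nx Ny (fun i j => c * g i j) := by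
  refine ⟨fun j hj => ⟨?_, ?_⟩, fun i hi => ⟨?_, ?_⟩⟩
  · show c * g 0 j = c * g 1 j; rw [(hg.1 j hj).1]
  · show c * g (Nx+1) j = c * g Nx j; rw [(hg.1 j hj).2]
  · show c * g i 0 = c * g i 1; rw [(hg.2 i hi).1]
  · show c * g i (Ny+1) = c * g i Ny; rw [(hg.2 i hi).2]

lemma neumann_sub (Nx Ny : ℕ) (g h : ℕ → ℕ → ℝ) (hg : NeumannBC Nx Ny g)
    (hh : NeumannBC Nx Ny h) : NeumannBC Nx Ny (fun i j => g i j - h i j) := by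
  refine ⟨fun j hj => ⟨?_, ?_⟩, fun i hi => ⟨?_, ?_⟩⟩
  · show g 0 j - h 0 j = g 1 j - h 1 j; rw [(hg.1 j hj).1, (hh.1 j hj).1]
  · show g (Nx+1) j - h (Nx+1) j = g Nx j - h Nx j; rw [(hg.1 j hj).2, (hh.1 j hj).2]
  · show g i 0 - h i 0 = g i 1 - h i 1; rw [(hg.2 i hi).1, (hh.2 i hi).1]
  · show g i (Ny+1) - h i (Ny+1) = g i Ny - h i Ny; rw [(hg.2 i hi).2, (hh.2 i hi).2]

lemma neumann_two_sub (Nx Ny : ℕ) (g h : ℕ → ℕ → ℝ) (hg : NeumannBC Nx Ny g)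
    (hh : NeumannBC Nx Ny h) : NeumannBC Nx Ny (fun i j => 2 * g i j - h i j) := by
  refine ⟨fun j hj => ⟨?_, ?_⟩, fun i hi => ⟨?_, ?_⟩⟩
  · show 2 * g 0 j - h 0 j = 2 * g 1 j - h 1 j; rw [(hg.1 j hj).1, (hh.1 j hj).1]
  · show 2 * g (Nx+1) j - h (Nx+1) j = 2 * g Nx j - h Nx j; rw [(hg.1 j hj).2, (hh.1 j hj).2]
  · show 2 * g i 0 - h i 0 = 2 * g i 1 - h i 1; rw [(hg.2 i hi).1, (hh.2 i hi).1]
  · show 2 * g i (Ny+1) - h i (Ny+1) = 2 * g i Ny - h i Ny; rw [(hg.2 i hi).2, (hh.2 i hi).2]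

lemma lap2H_eq (Nx Ny : ℕ) (hx hy : ℝ) (g : ℕ → ℕ → ℝ) :
    lap2H Nx Ny hx hy g = L2op Nx Ny hx hy g := rfl

lemma lap2_mid_split (Nx Ny : ℕ) (hx hy : ℝ) (Zp Zn : ℕ → ℕ → ℝ) (a b : ℕ) :
    lap2H Nx Ny hx hy (fun p q => (Zp p q + Zn p q)/2) a b
      = (1/2) * lap2H Nx Ny hx hy Zp a b + lap2H Nx Ny hx hy (fun p q => Zn p q / 2) a b := by
  have e : (fun p q => (Zp p q + Zn p q)/2)
      = (1/2 : ℝ) • Zp + (fun p q => Zn p q / 2) := by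
    funext p q; simp only [Pi.add_apply, Pi.smul_apply, smul_eq_mul]; ring
  rw [lap2H_eq, e, map_add, map_smul, ← lap2H_eq, ← lap2H_eq]
  simp only [Pi.add_apply, Pi.smul_apply, smul_eq_mul]

lemma lap2_mid_diff (Nx Ny : ℕ) (hx hy : ℝ) (g g' h : ℕ → ℕ → ℝ) (i j : ℕ) :
    lap2H Nx Ny hx hy (fun a b => (g a b + h a b)/2) i j
      - lap2H Nx Ny hx hy (fun a b => (g' a b + h a b)/2) i j
      = (1/2) * lap2H Nx Ny hx hy (fun a b => g a b - g' a b) i j := by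
  have e : (fun a b => (g a b + h a b)/2)
      = (fun a b => (g' a b + h a b)/2) + (1/2 : ℝ) • (fun a b => g a b - g' a b) := by
    funext a b; simp only [Pi.add_apply, Pi.smul_apply, smul_eq_mul]; ring
  rw [lap2H_eq, e, map_add, map_smul, ← lap2H_eq, ← lap2H_eq]
  simp only [Pi.add_apply, Pi.smul_apply, smul_eq_mul]
  ring

lemma WLop_eq2 (Nx Ny : ℕ) (hx hy α s : ℝ) (f g : ℕ → ℕ → ℝ) :
    WLop Nx Ny hx hy α s f g = extN Nx Ny (fun a b =>
      (1/2) * lap2H Nx Ny hx hy g a b + (α/2) * g a b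
        + ((1/(2*s))/(2*s)) * innerM Nx Ny hx hy f g * f a b) :=
  WLop_eq Nx Ny hx hy α s f g

lemma Aop_surjective (Nx Ny : ℕ) (hNx : 1 ≤ Nx) (hNy : 1 ≤ Ny) (hx hy Δt M β α s : ℝ)
    (hhx : 0 < hx) (hhy : 0 < hy) (hΔt : 0 < Δt) (hM : 0 < M) (hβ : 0 < β) (hα : 0 ≤ α)
    (hs : 0 < s) (f : ℕ → ℕ → ℝ) :
    Function.Surjective (Aop Nx Ny hx hy Δt M β α s f) := by
  rw [← LinearMap.injective_iff_surjective]
  refine (injective_iff_map_eq_zero _).mpr fun v hv => ?_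
  have hΔt' : Δt ≠ 0 := ne_of_gt hΔt
  have hc0 : (0:ℝ) < 2/Δt + β := by positivity
  set z := extN Nx Ny (ofVfun Nx Ny v) with hzdef
  rw [Aop_eq] at hv
  have hveq : ∀ i ∈ Finset.Icc 1 Nx, ∀ j ∈ Finset.Icc 1 Ny,
      (2/Δt + β) * z i j - M*Δt * lapH hx hy (WLop Nx Ny hx hy α s f z) i j = 0 := by
    intro i hi j hj
    have h0 : (0 : Fin Nx × Fin Ny → ℝ) = toVfun Nx Ny (fun _ _ => 0) := rfl
    rw [h0] at hv
    exact (toVfun_eq_iff Nx Ny _ _).mp hv i hi j hj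
  set w := fun i j => 2 * WLop Nx Ny hx hy α s f z i j with hwdef
  set r := 1/(2*s) * innerM Nx Ny hx hy f z with hrdef
  have hzN : NeumannBC Nx Ny z := extN_neumann Nx Ny hNx hNy _
  have hwN : NeumannBC Nx Ny w := by
    apply neumann_scale
    rw [WLop_eq]
    exact extN_neumann Nx Ny hNx hNy _
  have h1 : ∀ i ∈ Finset.Icc 1 Nx, ∀ j ∈ Finset.Icc 1 Ny,
      z i j = (M*Δt/(2*(2/Δt+β))) * lapH hx hy w i j := by
    intro i hi j hj
    have hL : lapH hx hy w i j = 2 * lapH hx hy (WLop Nx Ny hx hy α s f z) i j :=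
      lapH_scale_pt hx hy 2 _ i j
    have he := hveq i hi j hj
    have hcpos : (0:ℝ) < 2*(2/Δt+β) := by positivity
    have hκ'' : M*Δt/(2*(2/Δt+β)) * (2*(2/Δt+β)) = M*Δt :=
      div_mul_cancel₀ _ (ne_of_gt hcpos)
    rw [hL]
    apply mul_right_cancel₀ (ne_of_gt hcpos)
    linear_combination 2*he - (2*lapH hx hy (WLop Nx Ny hx hy α s f z) i j) * hκ'' 
  have h2 : ∀ i ∈ Finset.Icc 1 Nx, ∀ j ∈ Finset.Icc 1 Ny,
      w i j = lapH hx hy (extN Nx Ny (lapH hx hy z)) i j + α * z i j + (r/s) * f i j := by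
    intro i hi j hj
    have hwi : w i j = 2 * WLop Nx Ny hx hy α s f z i j := rfl
    rw [hwi, WLop_eq, extN_interior Nx Ny _ i hi j hj]
    have hs' : s ≠ 0 := ne_of_gt hs
    rw [hrdef]
    field_simp
  obtain ⟨hzw0, hr0⟩ := core Nx Ny hNx hNy hx hy hhx hhy f (M*Δt/(2*(2/Δt+β))) α s
    (by positivity) hα hs z w r hzN hwN h1 h2 hrdef
  funext p
  have hm1 : (p.1 : ℕ) + 1 ∈ Finset.Icc 1 Nx :=
    Finset.mem_Icc.mpr ⟨by omega, by have := p.1.isLt; omega⟩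
  have hm2 : (p.2 : ℕ) + 1 ∈ Finset.Icc 1 Ny :=
    Finset.mem_Icc.mpr ⟨by omega, by have := p.2.isLt; omega⟩
  have := (hzw0 _ hm1 _ hm2).1
  rw [hzdef] at this
  rw [Pi.zero_apply, ← ext_ofV_at Nx Ny v p]
  exact this


end AuxCHNS

/-- Theorem 3.1, unique solvability part: given the data at time levels `n-1` and `n`,
the linear scheme (3.14)-(3.17) admits a solution
`(Z^{n+1}, W^{n+1}, R^{n+1}, Ψ^{n+1})`, which is unique (grid functions being
determined at interior cells, and `R^{n+1}` as a real number). -/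
theorem fully_discrete_unique_solvability
    (Nx Ny : ℕ) (hNx : 1 ≤ Nx) (hNy : 1 ≤ Ny)
    (hx hy : ℝ) (hhx : 0 < hx) (hhy : 0 < hy)
    (Δt M β α : ℝ) (hΔt : 0 < Δt) (hM : 0 < M) (hβ : 0 < β) (hα : 0 ≤ α)
    (Zm Zn W0 Ψn : ℕ → ℕ → ℝ) (Rn : ℝ)
    (hZn : NeumannBC Nx Ny Zn)
    (hΔZn : NeumannBC Nx Ny (extN Nx Ny (lapH hx hy Zn)))
    (hW0 : NeumannBC Nx Ny W0)
    (hE1 : 0 < E1h Nx Ny hx hy (fun i j => (3 * Zn i j - Zm i j) / 2)) :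
    ∃ (Zp Wp Ψp : ℕ → ℕ → ℝ) (Rp : ℝ),
      (NeumannBC Nx Ny Zp ∧ NeumannBC Nx Ny Wp ∧
        (∀ i ∈ Finset.Icc 1 Nx, ∀ j ∈ Finset.Icc 1 Ny,
          Ψp i j - Ψn i j + β * Δt * ((Ψp i j + Ψn i j) / 2) =
            M * Δt * lapH hx hy (fun a b => (Wp a b + W0 a b) / 2) i j) ∧
        (∀ i ∈ Finset.Icc 1 Nx, ∀ j ∈ Finset.Icc 1 Ny,
          Δt * ((Ψp i j + Ψn i j) / 2) = Zp i j - Zn i j) ∧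
        (∀ i ∈ Finset.Icc 1 Nx, ∀ j ∈ Finset.Icc 1 Ny,
          (Wp i j + W0 i j) / 2 =
            lap2H Nx Ny hx hy (fun a b => (Zp a b + Zn a b) / 2) i j
            + 2 * lapH hx hy (fun a b => (3 * Zn a b - Zm a b) / 2) i j
            + α * ((Zp i j + Zn i j) / 2)
            + (Rp + Rn) / 2 /
                Real.sqrt (E1h Nx Ny hx hy (fun a b => (3 * Zn a b - Zm a b) / 2)) *
                ((3 * Zn i j - Zm i j) / 2) ^ 3) ∧
        (Rp - Rn =
          1 / (2 * Real.sqrt (E1h Nx Ny hx hy (fun a b => (3 * Zn a b - Zm a b) / 2))) *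
            innerM Nx Ny hx hy (fun i j => ((3 * Zn i j - Zm i j) / 2) ^ 3)
              (fun i j => Zp i j - Zn i j))) ∧
      (∀ (Zp' Wp' Ψp' : ℕ → ℕ → ℝ) (Rp' : ℝ),
        (NeumannBC Nx Ny Zp' ∧ NeumannBC Nx Ny Wp' ∧
          (∀ i ∈ Finset.Icc 1 Nx, ∀ j ∈ Finset.Icc 1 Ny,
            Ψp' i j - Ψn i j + β * Δt * ((Ψp' i j + Ψn i j) / 2) =
              M * Δt * lapH hx hy (fun a b => (Wp' a b + W0 a b) / 2) i j) ∧
          (∀ i ∈ Finset.Icc 1 Nx, ∀ j ∈ Finset.Icc 1 Ny,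
            Δt * ((Ψp' i j + Ψn i j) / 2) = Zp' i j - Zn i j) ∧
          (∀ i ∈ Finset.Icc 1 Nx, ∀ j ∈ Finset.Icc 1 Ny,
            (Wp' i j + W0 i j) / 2 =
              lap2H Nx Ny hx hy (fun a b => (Zp' a b + Zn a b) / 2) i j
              + 2 * lapH hx hy (fun a b => (3 * Zn a b - Zm a b) / 2) i j
              + α * ((Zp' i j + Zn i j) / 2)
              + (Rp' + Rn) / 2 /
                  Real.sqrt (E1h Nx Ny hx hy (fun a b => (3 * Zn a b - Zm a b) / 2)) *
                  ((3 * Zn i j - Zm i j) / 2) ^ 3) ∧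
          (Rp' - Rn =
            1 / (2 * Real.sqrt (E1h Nx Ny hx hy (fun a b => (3 * Zn a b - Zm a b) / 2))) *
              innerM Nx Ny hx hy (fun i j => ((3 * Zn i j - Zm i j) / 2) ^ 3)
                (fun i j => Zp' i j - Zn i j))) →
        ((∀ i ∈ Finset.Icc 1 Nx, ∀ j ∈ Finset.Icc 1 Ny,
            Zp' i j = Zp i j ∧ Wp' i j = Wp i j ∧ Ψp' i j = Ψp i j) ∧ Rp' = Rp)) := by
  have hΔt' : Δt ≠ 0 := ne_of_gt hΔt
  have hc0 : (0:ℝ) < 2/Δt + β := by positivity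
  set Zt : ℕ → ℕ → ℝ := fun i j => (3 * Zn i j - Zm i j) / 2 with hZtdef
  set f : ℕ → ℕ → ℝ := fun i j => ((3 * Zn i j - Zm i j) / 2) ^ 3 with hfdef
  set E := E1h Nx Ny hx hy Zt with hEdef
  set s := Real.sqrt E with hsdef
  have hs : 0 < s := Real.sqrt_pos.mpr hE1
  have hs' : s ≠ 0 := ne_of_gt hs
  set κ := M*Δt/(2*(2/Δt+β)) with hκdef
  have hκ : 0 < κ := by rw [hκdef]; positivity
  have hκc : κ * (2*(2+β*Δt)) = M*Δt*Δt := by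
    rw [hκdef]; rw [div_mul_eq_mul_div, div_eq_iff (by positivity : (2*(2/Δt+β)) ≠ 0)]
    field_simp
  -- existence: solve the reduced linear system
  set Wc := extN Nx Ny (fun i j =>
      lap2H Nx Ny hx hy (fun a b => Zn a b / 2) i j + 2 * lapH hx hy Zt i j
      + α * (Zn i j / 2)
      + ((2*Rn - 1/(2*s) * innerM Nx Ny hx hy f Zn)/(2*s)) * f i j) with hWcdef
  obtain ⟨v, hv⟩ := Aop_surjective Nx Ny hNx hNy hx hy Δt M β α s hhx hhy hΔt hM hβ hα hs f
      (toVfun Nx Ny (fun i j => 2*Ψn i j + (2/Δt+β)*Zn i j + M*Δt*lapH hx hy Wc i j))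
  rw [Aop_eq] at hv
  set Zp := extN Nx Ny (ofVfun Nx Ny v) with hZpdef
  have hAint := (toVfun_eq_iff Nx Ny _ _).mp hv
  set Rp := Rn + 1/(2*s) * innerM Nx Ny hx hy f (fun i j => Zp i j - Zn i j) with hRpdef
  set Wm := extN Nx Ny (fun i j =>
      lap2H Nx Ny hx hy (fun a b => (Zp a b + Zn a b)/2) i j + 2 * lapH hx hy Zt i j
      + α * ((Zp i j + Zn i j)/2) + (Rp+Rn)/2/s * f i j) with hWmdef
  set Wp : ℕ → ℕ → ℝ := fun i j => 2*Wm i j - W0 i j with hWpdef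
  set Ψp : ℕ → ℕ → ℝ := fun i j => 2*(Zp i j - Zn i j)/Δt - Ψn i j with hΨpdef
  have hZpN : NeumannBC Nx Ny Zp := by rw [hZpdef]; exact extN_neumann Nx Ny hNx hNy _
  have hWmN : NeumannBC Nx Ny Wm := by rw [hWmdef]; exact extN_neumann Nx Ny hNx hNy _
  have hWpN : NeumannBC Nx Ny Wp := by
    rw [hWpdef]; exact neumann_two_sub Nx Ny Wm W0 hWmN hW0
  -- decomposition of the midpoint chemical potential
  have hdec : ∀ i j, Wm i j = WLop Nx Ny hx hy α s f Zp i j + Wc i j := by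
    intro i j
    rw [hWmdef, hWcdef, WLop_eq2]
    simp only [extN]
    rw [lap2_mid_split Nx Ny hx hy Zp Zn]
    rw [hRpdef, innerM_sub_fun]
    ring
  have hWhalf : (fun a b => (Wp a b + W0 a b) / 2) = Wm := by
    funext a b; simp only [hWpdef]; ring
  -- condition (ii)
  have hcondII : ∀ i j, Δt * ((Ψp i j + Ψn i j) / 2) = Zp i j - Zn i j := by
    intro i j; simp only [hΨpdef]; field_simp; ring
  -- condition (iii)
  have hcondIII : ∀ i ∈ Finset.Icc 1 Nx, ∀ j ∈ Finset.Icc 1 Ny,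
      (Wp i j + W0 i j)/2 =
        lap2H Nx Ny hx hy (fun a b => (Zp a b + Zn a b)/2) i j + 2 * lapH hx hy Zt i j
        + α * ((Zp i j + Zn i j)/2) + (Rp+Rn)/2/s * ((3 * Zn i j - Zm i j) / 2) ^ 3 := by
    intro i hi j hj
    have h1 : (Wp i j + W0 i j)/2 = Wm i j := by simp only [hWpdef]; ring
    rw [h1, hWmdef, extN_interior Nx Ny _ i hi j hj]
  -- condition (iv)
  have hcondIV : Rp - Rn
      = 1/(2*s) * innerM Nx Ny hx hy f (fun i j => Zp i j - Zn i j) := by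
    rw [hRpdef]; ring
  -- condition (i)
  have hcondI : ∀ i ∈ Finset.Icc 1 Nx, ∀ j ∈ Finset.Icc 1 Ny,
      Ψp i j - Ψn i j + β*Δt*((Ψp i j + Ψn i j)/2)
        = M*Δt * lapH hx hy (fun a b => (Wp a b + W0 a b)/2) i j := by
    intro i hi j hj
    rw [hWhalf]
    have hWmfun : Wm = fun a b => WLop Nx Ny hx hy α s f Zp a b + Wc a b :=
      funext fun a => funext fun b => hdec a b
    rw [hWmfun, lapH_add_pt hx hy _ _ i j]
    have he := hAint i hi j hj
    have hinv : Δt * Δt⁻¹ = 1 := mul_inv_cancel₀ hΔt'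
    simp only [hΨpdef]
    linear_combination he + β*(Zp i j - Zn i j)*hinv
  refine ⟨Zp, Wp, Ψp, Rp, ⟨hZpN, hWpN, hcondI, fun i _ j _ => hcondII i j, hcondIII, hcondIV⟩, ?_⟩
  -- uniqueness
  rintro Zp' Wp' Ψp' Rp' ⟨hZpN', hWpN', hI', hII', hIII', hIV'⟩
  set z : ℕ → ℕ → ℝ := fun i j => Zp' i j - Zp i j with hzdef
  set w : ℕ → ℕ → ℝ := fun i j => Wp' i j - Wp i j with hwdef
  set r := Rp' - Rp with hrdef
  have hzN : NeumannBC Nx Ny z := neumann_sub Nx Ny _ _ hZpN' hZpN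
  have hwN : NeumannBC Nx Ny w := neumann_sub Nx Ny _ _ hWpN' hWpN
  have hΨdiff : ∀ i ∈ Finset.Icc 1 Nx, ∀ j ∈ Finset.Icc 1 Ny,
      Δt * (Ψp' i j - Ψp i j) = 2 * z i j := by
    intro i hi j hj
    have a1 := hII' i hi j hj
    have a2 := hcondII i j
    simp only [hzdef]
    linear_combination 2*a1 - 2*a2
  have h1c : ∀ i ∈ Finset.Icc 1 Nx, ∀ j ∈ Finset.Icc 1 Ny,
      z i j = κ * lapH hx hy w i j := by
    intro i hi j hj
    have b1 := hI' i hi j hj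
    have b2 := hcondI i hi j hj
    have hψ := hΨdiff i hi j hj
    have hlapd : lapH hx hy (fun a b => (Wp' a b + W0 a b)/2) i j
        - lapH hx hy (fun a b => (Wp a b + W0 a b)/2) i j
        = (1/2) * lapH hx hy w i j := by
      rw [lapH_mid_diff hx hy Wp' Wp W0 i j, ← hwdef]
    have step : z i j * (2*(2+β*Δt)) = M*Δt*Δt * lapH hx hy w i j := by
      linear_combination 2*Δt*b1 - 2*Δt*b2 - (2+β*Δt)*hψ + 2*M*Δt*Δt*hlapd
    have hcpos : (0:ℝ) < 2*(2+β*Δt) := by positivity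
    have hmul : z i j * (2*(2+β*Δt)) = (κ * lapH hx hy w i j) * (2*(2+β*Δt)) := by
      rw [step]; linear_combination (-(lapH hx hy w i j)) * hκc
    exact mul_right_cancel₀ (ne_of_gt hcpos) hmul
  have h2c : ∀ i ∈ Finset.Icc 1 Nx, ∀ j ∈ Finset.Icc 1 Ny,
      w i j = lapH hx hy (extN Nx Ny (lapH hx hy z)) i j + α * z i j + (r/s) * f i j := by
    intro i hi j hj
    have c1 := hIII' i hi j hj
    have c2 := hcondIII i hi j hj
    have hld := lap2_mid_diff Nx Ny hx hy Zp' Zp Zn i j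
    rw [← hzdef] at hld
    have hconv : lap2H Nx Ny hx hy z i j
        = lapH hx hy (extN Nx Ny (lapH hx hy z)) i j := rfl
    have hzq : z i j = Zp' i j - Zp i j := by simp only [hzdef]
    simp only [hwdef, hrdef, hfdef]
    linear_combination 2*c1 - 2*c2 + 2*hld + hconv - α*hzq
  have h3c : r = 1/(2*s) * innerM Nx Ny hx hy f z := by
    rw [hrdef]
    have hsplit : Rp' - Rp = (Rp' - Rn) - (Rp - Rn) := by ring
    rw [hsplit, hIV', hcondIV, ← mul_sub, ← innerM_sub_fun]
    congr 1
    apply innerM_congr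
    intro i j
    simp only [hzdef]
    ring
  obtain ⟨hzw0, hr0⟩ := core Nx Ny hNx hNy hx hy hhx hhy f κ α s hκ hα hs z w r
    hzN hwN h1c h2c h3c
  constructor
  · intro i hi j hj
    have hz0 := (hzw0 i hi j hj).1
    have hw0 := (hzw0 i hi j hj).2
    simp only [hzdef] at hz0
    simp only [hwdef] at hw0
    have hZeq : Zp' i j = Zp i j := by linarith
    have hWeq : Wp' i j = Wp i j := by linarith
    refine ⟨hZeq, hWeq, ?_⟩
    have a1 := hII' i hi j hj
    have a2 := hcondII i j
    have : Δt * ((Ψp' i j + Ψn i j)/2) = Δt * ((Ψp i j + Ψn i j)/2) := by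
      rw [a1, a2, hZeq]
    have hcΨ := mul_left_cancel₀ hΔt' this
    linear_combination 2 * hcΨ
  · rw [hrdef] at hr0
    exact sub_eq_zero.mp hr0
end
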